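/- arXiv:1312.3582 — 2 statements merged into one kernel-verified Lean document; each statement's English description precedes it below -/
import Mathlib

section
/- Let v ∈ C^N and S ⊆ [N] with ‖S ∪ supp(v)‖_{ω,0} ≤ t, and suppose A has ω-RIP constant δ_{ω,t}. Then ‖((I − A*A)v)_S‖₂ ≤ δ_{ω,t} ‖v‖₂. -/
open Finset

/-- ℓ2 norm of a finitely-indexed complex vector. -/
noncomputable def l2 {n : ℕ} (x : Fin n → ℂ) : ℝ := Real.sqrt (∑ j, ‖x j‖ ^ 2)

/-- ℓ1 norm. -/
noncomputable def l1 {n : ℕ} (x : Fin n → ℂ) : ℝ := ∑ j, ‖x j‖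

/-- Support of a vector as a finset. -/
noncomputable def spt {n : ℕ} (x : Fin n → ℂ) : Finset (Fin n) := Finset.univ.filter (fun j => x j ≠ 0)

/-- Weighted ℓ0 "norm" ‖x‖_{ω,0} = ∑_{j : x_j ≠ 0} ω_j². -/
noncomputable def wnorm0 {n : ℕ} (ω : Fin n → ℝ) (x : Fin n → ℂ) : ℝ :=
  ∑ j ∈ spt x, (ω j) ^ 2

/-- Weighted ℓ1 norm ‖x‖_{ω,1} = ∑_j |x_j| ω_j. -/
noncomputable def wl1 {n : ℕ} (ω : Fin n → ℝ) (x : Fin n → ℂ) : ℝ := ∑ j, ‖x j‖ * ω j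

/-- Weighted cardinality of an index set. -/
noncomputable def wcard {n : ℕ} (ω : Fin n → ℝ) (S : Finset (Fin n)) : ℝ := ∑ j ∈ S, (ω j) ^ 2

/-- Restriction of a vector to an index set (zeroing the other coordinates). -/
def restr {n : ℕ} (S : Finset (Fin n)) (x : Fin n → ℂ) : Fin n → ℂ :=
  fun j => if j ∈ S then x j else 0

lemma l2_sq {n : ℕ} (x : Fin n → ℂ) : l2 x ^ 2 = ∑ j, ‖x j‖ ^ 2 := by
  rw [l2, Real.sq_sqrt]; positivity

lemma l2_nonneg {n : ℕ} (x : Fin n → ℂ) : 0 ≤ l2 x := Real.sqrt_nonneg _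

lemma adjid {m N : ℕ} (A : Matrix (Fin m) (Fin N) ℂ) (x : Fin N → ℂ) (c : Fin m → ℂ) :
    ∑ i, (A.mulVec x) i * (starRingEnd ℂ) (c i)
      = ∑ j, x j * (starRingEnd ℂ) ((A.conjTranspose.mulVec c) j) := by
  simp only [Matrix.mulVec, dotProduct, Matrix.conjTranspose_apply, map_sum, map_mul,
    Finset.sum_mul, Finset.mul_sum]
  rw [Finset.sum_comm]
  apply Finset.sum_congr rfl; intro j _
  apply Finset.sum_congr rfl; intro i _
  simp only [RCLike.star_def, Complex.conj_conj]
  ring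

lemma term_expand (s : ℝ) (a b : ℂ) :
    ‖(s:ℂ) * a + b‖ ^ 2 = s^2 * ‖a‖^2 + ‖b‖^2 + 2*s*(a * (starRingEnd ℂ) b).re := by
  have h : ∀ z : ℂ, ‖z‖ ^ 2 = Complex.normSq z := fun z => by
    rw [Complex.sq_norm]
  rw [h, h, h, Complex.normSq_add]
  simp only [Complex.normSq_mul, Complex.normSq_ofReal, mul_assoc, Complex.re_ofReal_mul]
  ring

lemma sum_expand_add {n : ℕ} (s : ℝ) (x y : Fin n → ℂ) :
    ∑ j, ‖(s:ℂ) * x j + y j‖^2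
      = s^2 * ∑ j, ‖x j‖^2 + ∑ j, ‖y j‖^2 + 2*s*∑ j, (x j * (starRingEnd ℂ) (y j)).re := by
  rw [Finset.mul_sum, Finset.mul_sum, ← Finset.sum_add_distrib, ← Finset.sum_add_distrib]
  exact Finset.sum_congr rfl fun j _ => term_expand s (x j) (y j)

lemma sum_expand_sub {n : ℕ} (s : ℝ) (x y : Fin n → ℂ) :
    ∑ j, ‖(s:ℂ) * x j - y j‖^2
      = s^2 * ∑ j, ‖x j‖^2 + ∑ j, ‖y j‖^2 - 2*s*∑ j, (x j * (starRingEnd ℂ) (y j)).re := by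
  have h := sum_expand_add s x (fun j => -(y j))
  simp only [norm_neg, map_neg, mul_neg, Complex.neg_re, Finset.sum_neg_distrib,
    ← sub_eq_add_neg] at h
  linarith [h]


set_option maxHeartbeats 1000000 in
/-- ‖((I − A*A)v)_S‖₂ ≤ δ_{ω,t} ‖v‖₂ when ω(S ∪ supp v) ≤ t. -/
theorem wrip_restriction_bound {m N : ℕ} (A : Matrix (Fin m) (Fin N) ℂ)
    (ω : Fin N → ℝ) (hω : ∀ j, 1 ≤ ω j) (t δ : ℝ)
    (hRIP : ∀ z : Fin N → ℂ, wnorm0 ω z ≤ t →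
      (1 - δ) * l2 z ^ 2 ≤ l2 (A.mulVec z) ^ 2 ∧ l2 (A.mulVec z) ^ 2 ≤ (1 + δ) * l2 z ^ 2)
    (v : Fin N → ℂ) (S : Finset (Fin N)) (hsupp : wcard ω (S ∪ spt v) ≤ t) :
    l2 (restr S (fun j => v j - (A.conjTranspose.mulVec (A.mulVec v)) j)) ≤ δ * l2 v := by
  classical
  by_cases hv : v = 0
  · subst hv
    simp [l2, restr, Matrix.mulVec_zero]
  -- notation
  set w : Fin N → ℂ := fun j => v j - (A.conjTranspose.mulVec (A.mulVec v)) j with hwdef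
  set u : Fin N → ℂ := restr S w with hudef
  -- v is admissible, positivity facts
  have hadm : ∀ z : Fin N → ℂ, (∀ j, z j ≠ 0 → j ∈ S ∪ spt v) → wnorm0 ω z ≤ t := by
    intro z hz
    refine le_trans ?_ hsupp
    unfold wnorm0 wcard
    apply Finset.sum_le_sum_of_subset_of_nonneg
    · intro j hj
      simp only [spt, Finset.mem_filter, Finset.mem_univ, true_and] at hj
      exact hz j hj
    · intros; positivity
  have hnnv : 0 < ∑ j, ‖v j‖^2 := by
    obtain ⟨j, hj⟩ : ∃ j, v j ≠ 0 := by
      by_contra hc; push_neg at hc; exact hv (funext hc)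
    apply Finset.sum_pos' (fun i _ => by positivity)
    exact ⟨j, Finset.mem_univ j, pow_pos (norm_pos_iff.mpr hj) 2⟩
  have hlv : 0 < l2 v := Real.sqrt_pos.mpr hnnv
  have hδ : 0 ≤ δ := by
    obtain ⟨h1, h2⟩ := hRIP v (hadm v (fun j hj => Finset.mem_union_right _ (by simp [spt, hj])))
    nlinarith [l2_sq v, hlv]
  rcases (l2_nonneg u).eq_or_lt with hlu | hlu
  · rw [← hlu]; exact mul_nonneg hδ (l2_nonneg v)
  -- main case
  set s : ℝ := l2 v / l2 u with hsdef
  have hs : 0 < s := div_pos hlv hlu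
  set zp : Fin N → ℂ := fun j => (s:ℂ) * u j + v j with hzp
  set zm : Fin N → ℂ := fun j => (s:ℂ) * u j - v j with hzm
  have huS : ∀ j, j ∉ S → u j = 0 := fun j hj => by simp [hudef, restr, hj]
  have hsptv : ∀ j, j ∉ spt v → v j = 0 := fun j hj => by
    by_contra hc; exact hj (by simp [spt, hc])
  have hadm_p : wnorm0 ω zp ≤ t := by
    apply hadm; intro j hj
    rw [Finset.mem_union]
    by_contra hc; push_neg at hc
    exact hj (by simp [hzp, huS j hc.1, hsptv j hc.2])
  have hadm_m : wnorm0 ω zm ≤ t := by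
    apply hadm; intro j hj
    rw [Finset.mem_union]
    by_contra hc; push_neg at hc
    exact hj (by simp [hzm, huS j hc.1, hsptv j hc.2])
  -- A is linear on these combinations
  have hAzp : ∀ i, (A.mulVec zp) i = (s:ℂ) * (A.mulVec u) i + (A.mulVec v) i := by
    intro i
    simp only [hzp, Matrix.mulVec, dotProduct, mul_add, Finset.sum_add_distrib,
      Finset.mul_sum]
    congr 1
    exact Finset.sum_congr rfl fun j _ => by ring
  have hAzm : ∀ i, (A.mulVec zm) i = (s:ℂ) * (A.mulVec u) i - (A.mulVec v) i := by
    intro i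
    simp only [hzm, Matrix.mulVec, dotProduct, mul_sub, Finset.sum_sub_distrib,
      Finset.mul_sum]
    congr 1
    exact Finset.sum_congr rfl fun j _ => by ring
  -- abbreviations for the quadratic quantities
  set nnu : ℝ := ∑ j, ‖u j‖^2 with hnnu
  set nnv : ℝ := ∑ j, ‖v j‖^2 with hnnvdef
  set nnAu : ℝ := ∑ i, ‖(A.mulVec u) i‖^2 with hnnAu
  set nnAv : ℝ := ∑ i, ‖(A.mulVec v) i‖^2 with hnnAv
  set R : ℝ := ∑ j, (u j * (starRingEnd ℂ) (v j)).re with hR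
  set RA : ℝ := ∑ i, ((A.mulVec u) i * (starRingEnd ℂ) ((A.mulVec v) i)).re with hRA
  -- expansions
  have ep : ∑ j, ‖zp j‖^2 = s^2 * nnu + nnv + 2*s*R := sum_expand_add s u v
  have em : ∑ j, ‖zm j‖^2 = s^2 * nnu + nnv - 2*s*R := sum_expand_sub s u v
  have eAp : ∑ i, ‖(A.mulVec zp) i‖^2 = s^2 * nnAu + nnAv + 2*s*RA := by
    rw [show ∑ i, ‖(A.mulVec zp) i‖^2
        = ∑ i, ‖(s:ℂ) * (A.mulVec u) i + (A.mulVec v) i‖^2 from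
      Finset.sum_congr rfl fun i _ => by rw [hAzp i]]
    exact sum_expand_add s (A.mulVec u) (A.mulVec v)
  have eAm : ∑ i, ‖(A.mulVec zm) i‖^2 = s^2 * nnAu + nnAv - 2*s*RA := by
    rw [show ∑ i, ‖(A.mulVec zm) i‖^2
        = ∑ i, ‖(s:ℂ) * (A.mulVec u) i - (A.mulVec v) i‖^2 from
      Finset.sum_congr rfl fun i _ => by rw [hAzm i]]
    exact sum_expand_sub s (A.mulVec u) (A.mulVec v)
  -- the key identity R - RA = nnu
  have hRA' : RA = ∑ j, (u j * (starRingEnd ℂ) ((A.conjTranspose.mulVec (A.mulVec v)) j)).re := by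
    rw [hRA, ← Complex.re_sum, ← Complex.re_sum, adjid A u (A.mulVec v)]
  have key : R - RA = nnu := by
    rw [hR, hRA', hnnu, ← Finset.sum_sub_distrib]
    apply Finset.sum_congr rfl
    intro j _
    rw [← Complex.sub_re, ← mul_sub, ← map_sub]
    by_cases hj : j ∈ S
    · have hu : u j = w j := by simp [hudef, restr, hj]
      have hw : v j - (A.conjTranspose.mulVec (A.mulVec v)) j = w j := rfl
      rw [hw, hu, Complex.mul_conj, Complex.ofReal_re, Complex.normSq_eq_norm_sq]
    · simp [huS j hj]
  -- apply RIP
  obtain ⟨hp1, hp2⟩ := hRIP zp hadm_p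
  obtain ⟨hm1, hm2⟩ := hRIP zm hadm_m
  rw [l2_sq, l2_sq, ep, eAp] at hp1
  rw [l2_sq, l2_sq, em, eAm] at hm2
  -- combine
  have step : 4*s*(R - RA) ≤ 2*δ*(s^2*nnu + nnv) := by linarith [hp1, hm2]
  rw [key] at step
  have hnu : nnu = l2 u ^ 2 := (l2_sq u).symm
  have hnv : nnv = l2 v ^ 2 := (l2_sq v).symm
  have hsu : s * l2 u = l2 v := div_mul_cancel₀ _ (ne_of_gt hlu)
  have e2 : s^2 * nnu = l2 v ^ 2 := by rw [hnu, ← mul_pow, hsu]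
  have e1 : s * nnu = l2 v * l2 u := by rw [hnu, pow_two, ← mul_assoc, hsu]
  have step2 : 4 * (l2 v * l2 u) ≤ 2*δ*(l2 v ^2 + l2 v ^2) := by
    calc 4 * (l2 v * l2 u) = 4*s*nnu := by rw [← e1]; ring
    _ ≤ 2*δ*(s^2*nnu + nnv) := step
    _ = 2*δ*(l2 v^2 + l2 v^2) := by rw [e2, hnv]
  have h3 : l2 v * l2 u ≤ l2 v * (δ * l2 v) := by linarith [step2]

  exact le_of_mul_le_mul_left h3 hlv
end

section
/- With the notation of the IHWT iteration and ω-RIP constant δ_{ω,3s} < 1/√32, the residuals r^n = x^s − x^n satisfy the one-step recursion ‖r^{n+1}‖₂ ≤ 0.5 ‖r^n‖₂ + 2.17 ‖A x_{S̄} + e‖₂. -/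
open Finset

lemma spt_mem {n : ℕ} {x : Fin n → ℂ} {j : Fin n} : j ∈ spt x ↔ x j ≠ 0 := by
  simp [spt]
lemma not_spt {n : ℕ} {x : Fin n → ℂ} {j : Fin n} (h : j ∉ spt x) : x j = 0 := by
  by_contra hc; exact h (spt_mem.2 hc)
lemma l2_zero_iff {n : ℕ} (x : Fin n → ℂ) : l2 x = 0 ↔ x = 0 := by
  rw [l2, Real.sqrt_eq_zero (by positivity)]
  constructor
  · intro h; funext j
    have := (Finset.sum_eq_zero_iff_of_nonneg (fun i _ => by positivity)).1 h j (mem_univ j)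
    simpa using this
  · intro h; subst h; simp
lemma wnorm0_nonneg {n : ℕ} (ω : Fin n → ℝ) (x : Fin n → ℂ) : 0 ≤ wnorm0 ω x := by
  apply Finset.sum_nonneg; intro j _; positivity
lemma wnorm0_eq_wcard {n : ℕ} (ω : Fin n → ℝ) (x : Fin n → ℂ) : wnorm0 ω x = wcard ω (spt x) := rfl
lemma wnorm0_le_of_spt_subset {n : ℕ} (ω : Fin n → ℝ) {x : Fin n → ℂ} {T : Finset (Fin n)}
    (h : spt x ⊆ T) : wnorm0 ω x ≤ wcard ω T :=
  Finset.sum_le_sum_of_subset_of_nonneg h (fun j _ _ => by positivity)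
lemma wcard_union_le {n : ℕ} (ω : Fin n → ℝ) (S T : Finset (Fin n)) :
    wcard ω (S ∪ T) ≤ wcard ω S + wcard ω T := by
  rw [wcard, wcard, wcard, ← Finset.sum_union_inter]
  have : 0 ≤ ∑ j ∈ S ∩ T, (ω j)^2 := Finset.sum_nonneg (fun j _ => by positivity)
  linarith
lemma spt_sub_subset {n : ℕ} (u v : Fin n → ℂ) :
    spt (fun j => u j - v j) ⊆ spt u ∪ spt v := by
  intro j hj
  rw [spt_mem] at hj
  by_contra hc
  simp only [Finset.mem_union, spt_mem] at hc
  push_neg at hc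
  rcases hc with ⟨h1, h2⟩
  exact hj (by simp [h1, h2])
lemma spt_add_subset {n : ℕ} (u v : Fin n → ℂ) :
    spt (fun j => u j + v j) ⊆ spt u ∪ spt v := by
  intro j hj
  rw [spt_mem] at hj
  by_contra hc
  simp only [Finset.mem_union, spt_mem] at hc
  push_neg at hc
  rcases hc with ⟨h1, h2⟩
  exact hj (by simp [h1, h2])
lemma spt_smul_subset {n : ℕ} (c : ℂ) (u : Fin n → ℂ) :
    spt (fun j => c * u j) ⊆ spt u := by
  intro j hj
  rw [spt_mem] at hj
  rw [spt_mem]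
  intro h; exact hj (by simp [h])
lemma spt_restr_subset {n : ℕ} (T : Finset (Fin n)) (u : Fin n → ℂ) :
    spt (restr T u) ⊆ T := by
  intro j hj
  rw [spt_mem] at hj
  by_contra hc
  exact hj (by simp [restr, hc])
lemma restr_eq_self {n : ℕ} {T : Finset (Fin n)} {u : Fin n → ℂ}
    (h : spt u ⊆ T) : restr T u = u := by
  funext j
  by_cases hj : j ∈ T
  · simp [restr, hj]
  · simp [restr, hj, not_spt (fun hs => hj (h hs))]
lemma l2_restr_sq {n : ℕ} (T : Finset (Fin n)) (u : Fin n → ℂ) :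
    l2 (restr T u) ^ 2 = ∑ j ∈ T, ‖u j‖ ^ 2 := by
  rw [l2_sq]
  rw [← Finset.sum_filter_add_sum_filter_not Finset.univ (· ∈ T)]
  have h1 : ∑ j ∈ Finset.univ.filter (· ∈ T), ‖restr T u j‖ ^ 2 = ∑ j ∈ T, ‖u j‖^2 := by
    rw [Finset.filter_mem_eq_inter, Finset.univ_inter]
    exact Finset.sum_congr rfl (fun j hj => by simp [restr, hj])
  have h2 : ∑ j ∈ Finset.univ.filter (¬ · ∈ T), ‖restr T u j‖ ^ 2 = 0 := by
    apply Finset.sum_eq_zero; intro j hj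
    simp only [Finset.mem_filter] at hj
    simp [restr, hj.2]
  rw [h1, h2, add_zero]

noncomputable def ev {n : ℕ} (x : Fin n → ℂ) : EuclideanSpace ℂ (Fin n) :=
  (WithLp.equiv 2 (Fin n → ℂ)).symm x

lemma l2_eq {n : ℕ} (x : Fin n → ℂ) : l2 x = ‖ev x‖ := by
  simp [l2, ev, EuclideanSpace.norm_eq]

lemma ev_sub {n : ℕ} (u v : Fin n → ℂ) : ev (fun j => u j - v j) = ev u - ev v := rfl
lemma ev_add {n : ℕ} (u v : Fin n → ℂ) : ev (fun j => u j + v j) = ev u + ev v := rfl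
lemma ev_smul {n : ℕ} (c : ℂ) (u : Fin n → ℂ) : ev (fun j => c * u j) = c • ev u := rfl

open scoped InnerProductSpace in
lemma ev_inner {n : ℕ} (u v : Fin n → ℂ) :
    ⟪ev u, ev v⟫_ℂ = ∑ j, (starRingEnd ℂ) (u j) * v j := by
  simp [ev, EuclideanSpace.inner_toLp_toLp, dotProduct, mul_comm]

open scoped InnerProductSpace in
lemma ev_adj {m n : ℕ} (A : Matrix (Fin m) (Fin n) ℂ) (u : Fin n → ℂ) (w : Fin m → ℂ) :
    ⟪ev u, ev (A.conjTranspose.mulVec w)⟫_ℂ = ⟪ev (A.mulVec u), ev w⟫_ℂ := by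
  simp only [ev, WithLp.equiv_symm_apply]
  rw [EuclideanSpace.inner_toLp_toLp, EuclideanSpace.inner_toLp_toLp,
    Matrix.star_mulVec, dotProduct_comm w, ← Matrix.dotProduct_mulVec, dotProduct_comm]

open scoped InnerProductSpace

lemma l2_add_le {n : ℕ} (u v : Fin n → ℂ) : l2 (fun j => u j + v j) ≤ l2 u + l2 v := by
  rw [l2_eq, l2_eq, l2_eq, ev_add]; exact norm_add_le _ _

lemma inner_restr_self {n : ℕ} (T : Finset (Fin n)) (u : Fin n → ℂ) :
    RCLike.re ⟪ev (restr T u), ev u⟫_ℂ = ‖ev (restr T u)‖ ^ 2 := by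
  have h : ⟪ev (restr T u), ev u⟫_ℂ = ⟪ev (restr T u), ev (restr T u)⟫_ℂ := by
    rw [ev_inner, ev_inner]
    refine Finset.sum_congr rfl (fun j _ => ?_)
    by_cases hj : j ∈ T
    · simp [restr, hj]
    · simp [restr, hj]
  rw [h, inner_self_eq_norm_sq]

lemma l2_mulVec_le {m n : ℕ} (A : Matrix (Fin m) (Fin n) ℂ) {δ : ℝ} (hδ0 : 0 ≤ δ)
    {z : Fin n → ℂ} (h : l2 (A.mulVec z) ^ 2 ≤ (1 + δ) * l2 z ^ 2) :
    l2 (A.mulVec z) ≤ Real.sqrt (1 + δ) * l2 z := by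
  have h1 : l2 (A.mulVec z) = Real.sqrt (l2 (A.mulVec z) ^ 2) := by
    rw [Real.sqrt_sq (l2_nonneg _)]
  rw [h1]
  calc Real.sqrt (l2 (A.mulVec z) ^ 2) ≤ Real.sqrt ((1 + δ) * l2 z ^ 2) :=
        Real.sqrt_le_sqrt h
    _ = Real.sqrt (1 + δ) * l2 z := by
        rw [Real.sqrt_mul (by linarith), Real.sqrt_sq (l2_nonneg _)]

lemma boundD {m n : ℕ} (A : Matrix (Fin m) (Fin n) ℂ) {δ : ℝ} (hδ0 : 0 ≤ δ)
    (T : Finset (Fin n)) (w : Fin m → ℂ)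
    (hup : ∀ z : Fin n → ℂ, spt z ⊆ T → l2 (A.mulVec z) ^ 2 ≤ (1 + δ) * l2 z ^ 2) :
    l2 (restr T (A.conjTranspose.mulVec w)) ≤ Real.sqrt (1 + δ) * l2 w := by
  set v := restr T (A.conjTranspose.mulVec w) with hv
  have h1 : l2 v ^ 2 = RCLike.re ⟪ev (A.mulVec v), ev w⟫_ℂ := by
    rw [← ev_adj, l2_eq, hv, inner_restr_self]
  have h2 : RCLike.re ⟪ev (A.mulVec v), ev w⟫_ℂ ≤ ‖ev (A.mulVec v)‖ * ‖ev w‖ :=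
    re_inner_le_norm _ _
  rw [← l2_eq, ← l2_eq] at h2
  have h3 : l2 (A.mulVec v) ≤ Real.sqrt (1 + δ) * l2 v :=
    l2_mulVec_le A hδ0 (hup v (spt_restr_subset T _))
  have h4 : l2 v ^ 2 ≤ Real.sqrt (1 + δ) * l2 v * l2 w := by
    calc l2 v ^ 2 ≤ l2 (A.mulVec v) * l2 w := by rw [h1]; exact h2
      _ ≤ Real.sqrt (1 + δ) * l2 v * l2 w :=
          mul_le_mul_of_nonneg_right h3 (l2_nonneg _)
  rcases eq_or_lt_of_le (l2_nonneg v) with h0 | h0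
  · rw [← h0]; exact mul_nonneg (Real.sqrt_nonneg _) (l2_nonneg _)
  · have := mul_le_mul_of_nonneg_left h4 (le_of_lt (inv_pos.2 h0))
    calc l2 v = (l2 v)⁻¹ * l2 v ^ 2 := by field_simp [pow_two]
      _ ≤ (l2 v)⁻¹ * (Real.sqrt (1 + δ) * l2 v * l2 w) := by
          exact mul_le_mul_of_nonneg_left h4 (le_of_lt (inv_pos.2 h0))
      _ = Real.sqrt (1 + δ) * l2 w := by field_simp

lemma mulVec_comb_add {m n : ℕ} (A : Matrix (Fin m) (Fin n) ℂ) (c d : ℂ) (r v : Fin n → ℂ) :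
    A.mulVec (fun j => c * r j + d * v j) = fun i => c * A.mulVec r i + d * A.mulVec v i := by
  funext i
  simp only [Matrix.mulVec, dotProduct, Finset.mul_sum, ← Finset.sum_add_distrib]
  exact Finset.sum_congr rfl fun j _ => by ring

lemma mulVec_comb_sub {m n : ℕ} (A : Matrix (Fin m) (Fin n) ℂ) (c d : ℂ) (r v : Fin n → ℂ) :
    A.mulVec (fun j => c * r j - d * v j) = fun i => c * A.mulVec r i - d * A.mulVec v i := by
  funext i
  simp only [Matrix.mulVec, dotProduct, Finset.mul_sum, ← Finset.sum_sub_distrib]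
  exact Finset.sum_congr rfl fun j _ => by ring

lemma spt_comb_sub {n : ℕ} (c d : ℂ) (u v : Fin n → ℂ) :
    spt (fun j => c * u j - d * v j) ⊆ spt u ∪ spt v := by
  intro j hj
  rw [spt_mem] at hj
  by_contra hc
  simp only [Finset.mem_union, spt_mem, not_or, not_not] at hc
  exact hj (by simp [hc.1, hc.2])

lemma spt_comb_add {n : ℕ} (c d : ℂ) (u v : Fin n → ℂ) :
    spt (fun j => c * u j + d * v j) ⊆ spt u ∪ spt v := by
  intro j hj
  rw [spt_mem] at hj
  by_contra hc
  simp only [Finset.mem_union, spt_mem, not_or, not_not] at hc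
  exact hj (by simp [hc.1, hc.2])

lemma polar_arith (δ P Q AP AQ cR cV V2 : ℝ)
    (hp1 : (1 - δ) * P ^ 2 ≤ AP ^ 2) (hq2 : AQ ^ 2 ≤ (1 + δ) * Q ^ 2)
    (par : P * P + Q * Q = 2 * (cR * cR + cV * cV))
    (key : V2 = (P * P - Q * Q) / 4 - (AP * AP - AQ * AQ) / 4) :
    V2 ≤ δ / 2 * (cR ^ 2 + cV ^ 2) := by
  have par' : δ * (P * P) + δ * (Q * Q) = 2 * δ * (cR * cR + cV * cV) := by
    linear_combination δ * par
  linarith [hp1, hq2, key, par']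

lemma boundC {m n : ℕ} (A : Matrix (Fin m) (Fin n) ℂ) {δ : ℝ} (hδ0 : 0 ≤ δ)
    (T : Finset (Fin n)) (r : Fin n → ℂ) (hr : spt r ⊆ T)
    (hrip : ∀ z : Fin n → ℂ, spt z ⊆ T →
      (1 - δ) * l2 z ^ 2 ≤ l2 (A.mulVec z) ^ 2 ∧ l2 (A.mulVec z) ^ 2 ≤ (1 + δ) * l2 z ^ 2) :
    l2 (restr T (fun j => r j - A.conjTranspose.mulVec (A.mulVec r) j)) ≤ δ * l2 r := by
  by_cases hr0 : l2 r = 0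
  · have hrz : r = 0 := (l2_zero_iff r).1 hr0
    subst hrz
    have h0 : restr T (fun j => (0 : Fin n → ℂ) j - A.conjTranspose.mulVec (A.mulVec 0) j)
        = (fun _ => (0:ℂ)) := by
      funext j; simp [restr, Matrix.mulVec_zero]
    rw [h0, hr0]
    have : l2 (fun _ : Fin n => (0:ℂ)) = 0 := by simp [l2]
    rw [this]; simp
  set g : Fin n → ℂ := fun j => r j - A.conjTranspose.mulVec (A.mulVec r) j with hg
  set v : Fin n → ℂ := restr T g with hv
  by_cases hv0 : l2 v = 0
  · rw [hv0]; exact mul_nonneg hδ0 (l2_nonneg _)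
  have hrpos : 0 < l2 r := lt_of_le_of_ne (l2_nonneg r) (Ne.symm hr0)
  have hvpos : 0 < l2 v := lt_of_le_of_ne (l2_nonneg v) (Ne.symm hv0)
  have hsv : spt v ⊆ T := spt_restr_subset T g
  have key : l2 v ^ 2 = RCLike.re ⟪ev v, ev r⟫_ℂ
      - RCLike.re ⟪ev (A.mulVec v), ev (A.mulVec r)⟫_ℂ := by
    have h1 : l2 v ^ 2 = RCLike.re ⟪ev v, ev g⟫_ℂ := by
      rw [l2_eq, hv, inner_restr_self]
    have h2 : ev g = ev r - ev (A.conjTranspose.mulVec (A.mulVec r)) := by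
      rw [hg]; exact ev_sub _ _
    rw [h1, h2, inner_sub_right, map_sub, ev_adj]
  have hpol : ∀ c : ℝ, 0 < c →
      l2 v ^ 2 ≤ δ / 2 * ((c * l2 r) ^ 2 + (c⁻¹ * l2 v) ^ 2) := by
    intro c hc
    have hcC : ((c : ℂ)) ≠ 0 := by
      simpa using ne_of_gt hc
    set p : Fin n → ℂ := fun j => (c:ℂ) * r j + ((c:ℂ))⁻¹ * v j with hp
    set q : Fin n → ℂ := fun j => (c:ℂ) * r j - ((c:ℂ))⁻¹ * v j with hq
    have hsp : spt p ⊆ T := subset_trans (spt_comb_add _ _ _ _) (Finset.union_subset hr hsv)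
    have hsq : spt q ⊆ T := subset_trans (spt_comb_sub _ _ _ _) (Finset.union_subset hr hsv)
    have hevp : ev p = (c:ℂ) • ev r + ((c:ℂ))⁻¹ • ev v := rfl
    have hevq : ev q = (c:ℂ) • ev r - ((c:ℂ))⁻¹ • ev v := rfl
    have hevAp : ev (A.mulVec p) = (c:ℂ) • ev (A.mulVec r) + ((c:ℂ))⁻¹ • ev (A.mulVec v) := by
      rw [hp, mulVec_comb_add]; rfl
    have hevAq : ev (A.mulVec q) = (c:ℂ) • ev (A.mulVec r) - ((c:ℂ))⁻¹ • ev (A.mulVec v) := by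
      rw [hq, mulVec_comb_sub]; rfl
    have hxy : ∀ a b : EuclideanSpace ℂ (Fin n), ⟪(c:ℂ) • a, ((c:ℂ))⁻¹ • b⟫_ℂ = ⟪a, b⟫_ℂ := by
      intro a b
      rw [inner_smul_left, inner_smul_right, ← mul_assoc, Complex.conj_ofReal,
        mul_inv_cancel₀ hcC, one_mul]
    have hxym : ∀ a b : EuclideanSpace ℂ (Fin m), ⟪(c:ℂ) • a, ((c:ℂ))⁻¹ • b⟫_ℂ = ⟪a, b⟫_ℂ := by
      intro a b
      rw [inner_smul_left, inner_smul_right, ← mul_assoc, Complex.conj_ofReal,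
        mul_inv_cancel₀ hcC, one_mul]
    have e1 : RCLike.re ⟪ev v, ev r⟫_ℂ = (‖ev p‖ * ‖ev p‖ - ‖ev q‖ * ‖ev q‖) / 4 := by
      rw [inner_re_symm, ← hxy (ev r) (ev v),
        re_inner_eq_norm_add_mul_self_sub_norm_sub_mul_self_div_four, ← hevp, ← hevq]
    have e2 : RCLike.re ⟪ev (A.mulVec v), ev (A.mulVec r)⟫_ℂ
        = (‖ev (A.mulVec p)‖ * ‖ev (A.mulVec p)‖ - ‖ev (A.mulVec q)‖ * ‖ev (A.mulVec q)‖) / 4 := by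
      rw [inner_re_symm, ← hxym (ev (A.mulVec r)) (ev (A.mulVec v)),
        re_inner_eq_norm_add_mul_self_sub_norm_sub_mul_self_div_four, ← hevAp, ← hevAq]
    obtain ⟨hp1, hp2⟩ := hrip p hsp
    obtain ⟨hq1, hq2⟩ := hrip q hsq
    rw [l2_eq, l2_eq] at hp1 hq2
    have par := parallelogram_law_with_norm ℂ ((c:ℂ) • ev r) (((c:ℂ))⁻¹ • ev v)
    rw [← hevp, ← hevq] at par
    have hnr : ‖(c:ℂ) • ev r‖ = c * ‖ev r‖ := by
      rw [norm_smul]; simp [Complex.norm_real, abs_of_pos hc]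
    have hnv : ‖((c:ℂ))⁻¹ • ev v‖ = c⁻¹ * ‖ev v‖ := by
      rw [norm_smul]; simp [Complex.norm_real, abs_of_pos hc]
    rw [hnr, hnv] at par
    rw [l2_eq r, l2_eq v]
    exact polar_arith δ (‖ev p‖) (‖ev q‖) (‖ev (A.mulVec p)‖) (‖ev (A.mulVec q)‖)
      (c * ‖ev r‖) (c⁻¹ * ‖ev v‖) (‖ev v‖ ^ 2) hp1 hq2 (by linear_combination par) (by rw [← l2_eq v, key, e1, e2])
  -- choose the optimal c
  have hc : 0 < Real.sqrt (l2 v / l2 r) := Real.sqrt_pos.2 (div_pos hvpos hrpos)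
  have h := hpol _ hc
  have hc2 : Real.sqrt (l2 v / l2 r) ^ 2 = l2 v / l2 r :=
    Real.sq_sqrt (le_of_lt (div_pos hvpos hrpos))
  have e3 : (Real.sqrt (l2 v / l2 r) * l2 r) ^ 2 = l2 v * l2 r := by
    rw [mul_pow, hc2]; field_simp
  have e4 : ((Real.sqrt (l2 v / l2 r))⁻¹ * l2 v) ^ 2 = l2 v * l2 r := by
    rw [mul_pow, inv_pow, hc2]
    field_simp
  rw [e3, e4] at h
  nlinarith [h, hvpos, hrpos, mul_pos hvpos hrpos]

lemma mulVec_add' {m n : ℕ} (A : Matrix (Fin m) (Fin n) ℂ) (u w : Fin n → ℂ) :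
    A.mulVec (fun j => u j + w j) = fun i => A.mulVec u i + A.mulVec w i := by
  funext i
  simp only [Matrix.mulVec, dotProduct, ← Finset.sum_add_distrib]
  exact Finset.sum_congr rfl fun j _ => by ring

lemma mulVec_sub' {m n : ℕ} (A : Matrix (Fin m) (Fin n) ℂ) (u w : Fin n → ℂ) :
    A.mulVec (fun j => u j - w j) = fun i => A.mulVec u i - A.mulVec w i := by
  funext i
  simp only [Matrix.mulVec, dotProduct, ← Finset.sum_sub_distrib]
  exact Finset.sum_congr rfl fun j _ => by ring

lemma restr_add {n : ℕ} (T : Finset (Fin n)) (u w : Fin n → ℂ) :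
    restr T (fun j => u j + w j) = fun j => restr T u j + restr T w j := by
  funext j; by_cases hj : j ∈ T <;> simp [restr, hj]

lemma l2_restr_neg {n : ℕ} (T : Finset (Fin n)) (u w : Fin n → ℂ) :
    l2 (restr T (fun j => u j - w j)) = l2 (restr T (fun j => w j - u j)) := by
  unfold l2 restr
  congr 1
  refine Finset.sum_congr rfl fun j _ => ?_
  by_cases hj : j ∈ T <;> simp [hj, norm_sub_rev]

lemma restr_compare {n : ℕ} (T : Finset (Fin n)) (u w : Fin n → ℂ)
    (hoff : ∀ j ∉ T, u j = w j) (h : l2 u ≤ l2 w) :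
    l2 (restr T u) ≤ l2 (restr T w) := by
  classical
  have hu : l2 u ^ 2 = l2 (restr T u) ^ 2 + ∑ j ∈ Tᶜ, ‖u j‖ ^ 2 := by
    rw [l2_restr_sq, l2_sq, ← Finset.sum_add_sum_compl T]
  have hw : l2 w ^ 2 = l2 (restr T w) ^ 2 + ∑ j ∈ Tᶜ, ‖w j‖ ^ 2 := by
    rw [l2_restr_sq, l2_sq, ← Finset.sum_add_sum_compl T]
  have hoff' : ∑ j ∈ Tᶜ, ‖u j‖ ^ 2 = ∑ j ∈ Tᶜ, ‖w j‖ ^ 2 :=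
    Finset.sum_congr rfl fun j hj => by rw [hoff j (Finset.mem_compl.1 hj)]
  have hsq : l2 (restr T u) ^ 2 ≤ l2 (restr T w) ^ 2 := by
    have h2 : l2 u ^ 2 ≤ l2 w ^ 2 := pow_le_pow_left₀ (l2_nonneg u) h 2
    rw [hu, hw, hoff'] at h2
    linarith
  rw [← Real.sqrt_sq (l2_nonneg (restr T u)), ← Real.sqrt_sq (l2_nonneg (restr T w))]
  exact Real.sqrt_le_sqrt hsq


/-- IHWT one-step contraction: the residuals r^n = x^s − x^n satisfy
‖r^{n+1}‖₂ ≤ 0.5‖r^n‖₂ + 2.17‖A x_{S̄} + e‖₂. -/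
theorem ihwt_one_step {m N : ℕ} (A : Matrix (Fin m) (Fin N) ℂ)
    (ω : Fin N → ℝ) (hω : ∀ j, 1 ≤ ω j) (s : ℝ)
    (x : Fin N → ℂ) (e y : Fin m → ℂ) (hy : y = fun i => A.mulVec x i + e i)
    (xs : Fin N → ℂ) (hxs_sparse : wnorm0 ω xs ≤ s)
    (hxs_best : ∀ z : Fin N → ℂ, wnorm0 ω z ≤ s →
      l2 (fun j => x j - xs j) ≤ l2 (fun j => x j - z j))
    (δ : ℝ) (hδ : δ < 1 / Real.sqrt 32)
    (hRIP : ∀ z : Fin N → ℂ, wnorm0 ω z ≤ 3 * s →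
      (1 - δ) * l2 z ^ 2 ≤ l2 (A.mulVec z) ^ 2 ∧ l2 (A.mulVec z) ^ 2 ≤ (1 + δ) * l2 z ^ 2)
    (X : ℕ → Fin N → ℂ) (hX0 : X 0 = 0)
    (hX : ∀ n, wnorm0 ω (X (n + 1)) ≤ s ∧
      ∀ z : Fin N → ℂ, wnorm0 ω z ≤ s →
        l2 (fun j => (X n j + A.conjTranspose.mulVec (fun i => y i - A.mulVec (X n) i) j) - X (n + 1) j) ≤
        l2 (fun j => (X n j + A.conjTranspose.mulVec (fun i => y i - A.mulVec (X n) i) j) - z j)) :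
    ∀ n : ℕ,
      l2 (fun j => xs j - X (n + 1) j) ≤
        0.5 * l2 (fun j => xs j - X n j) +
          2.17 * l2 (fun i => A.mulVec (fun j => x j - xs j) i + e i) := by
  intro n
  have hs_nonneg : 0 ≤ s := le_trans (wnorm0_nonneg ω xs) hxs_sparse
  have hXs : ∀ k, wnorm0 ω (X k) ≤ s := by
    intro k
    cases k with
    | zero =>
        rw [hX0]
        have hspt : spt (0 : Fin N → ℂ) = ∅ := by simp [spt]
        rw [wnorm0, hspt]
        simpa using hs_nonneg
    | succ k => exact (hX k).1
  set e' : Fin m → ℂ := fun i => A.mulVec (fun j => x j - xs j) i + e i with he'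
  set r : Fin N → ℂ := fun j => xs j - X n j with hr
  -- degenerate case δ < 0
  by_cases hδ0 : 0 ≤ δ
  swap
  · push_neg at hδ0
    have hzero : ∀ z : Fin N → ℂ, wnorm0 ω z ≤ 3 * s → z = 0 := by
      intro z hz
      obtain ⟨h1, h2⟩ := hRIP z hz
      have ha : l2 z ^ 2 ≤ 0 := by nlinarith [h1, h2]
      have hb : l2 z = 0 := by nlinarith [l2_nonneg z, sq_nonneg (l2 z)]
      exact (l2_zero_iff z).1 hb
    have hxs0 : xs = 0 := hzero xs (by linarith)
    have hX1 : X (n + 1) = 0 := hzero (X (n + 1)) (by linarith [hXs (n + 1)])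
    have hL : l2 (fun j => xs j - X (n + 1) j) = 0 := by
      rw [hxs0, hX1]; simp [l2]
    rw [hL]
    have := l2_nonneg r
    have := l2_nonneg e'
    positivity
  -- main case
  set T : Finset (Fin N) := spt xs ∪ spt (X n) ∪ spt (X (n + 1)) with hT
  have hT1 : spt xs ⊆ T := le_trans Finset.subset_union_left Finset.subset_union_left
  have hT2 : spt (X n) ⊆ T := le_trans Finset.subset_union_right Finset.subset_union_left
  have hT3 : spt (X (n + 1)) ⊆ T := Finset.subset_union_right
  have hTw : wcard ω T ≤ 3 * s := by
    have h1 := wcard_union_le ω (spt xs ∪ spt (X n)) (spt (X (n + 1)))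
    have h2 := wcard_union_le ω (spt xs) (spt (X n))
    have e1 : wcard ω (spt xs) ≤ s := by rw [← wnorm0_eq_wcard]; exact hxs_sparse
    have e2 : wcard ω (spt (X n)) ≤ s := by rw [← wnorm0_eq_wcard]; exact hXs n
    have e3 : wcard ω (spt (X (n + 1))) ≤ s := by rw [← wnorm0_eq_wcard]; exact hXs (n + 1)
    rw [hT]
    linarith
  have hrip' : ∀ z : Fin N → ℂ, spt z ⊆ T →
      (1 - δ) * l2 z ^ 2 ≤ l2 (A.mulVec z) ^ 2 ∧ l2 (A.mulVec z) ^ 2 ≤ (1 + δ) * l2 z ^ 2 :=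
    fun z hz => hRIP z (le_trans (wnorm0_le_of_spt_subset ω hz) hTw)
  have hsr : spt r ⊆ T := by
    rw [hr]
    exact le_trans (spt_sub_subset xs (X n))
      (Finset.union_subset hT1 hT2)
  -- the gradient step vector
  set F : Fin N → ℂ :=
    fun j => X n j + A.conjTranspose.mulVec (fun i => y i - A.mulVec (X n) i) j with hF
  have hmin : l2 (fun j => F j - X (n + 1) j) ≤ l2 (fun j => F j - xs j) :=
    (hX n).2 xs hxs_sparse
  -- algebraic identity: xs - F = (r - Aᴴ A r) - Aᴴ e'
  have hy1 : (fun i => y i - A.mulVec (X n) i) = (fun i => A.mulVec r i + e' i) := by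
    funext i
    have h1 := congrFun (mulVec_sub' A xs (X n)) i
    have h2 := congrFun (mulVec_sub' A x xs) i
    simp only [hy, he', hr]
    rw [h1, h2]
    ring
  have hxa : (fun j => xs j - F j)
      = (fun j => (r j - A.conjTranspose.mulVec (A.mulVec r) j)
          - A.conjTranspose.mulVec e' j) := by
    funext j
    rw [hF]
    simp only [hy1]
    have h4 := congrFun (mulVec_add' A.conjTranspose (A.mulVec r) e') j
    rw [h4, hr]
    ring
  -- step 1: pass to restriction
  have hsub1 : spt (fun j => xs j - X (n + 1) j) ⊆ T :=
    le_trans (spt_sub_subset xs (X (n + 1))) (Finset.union_subset hT1 hT3)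
  have step1 : l2 (fun j => xs j - X (n + 1) j)
      = l2 (restr T (fun j => xs j - X (n + 1) j)) := by
    rw [restr_eq_self hsub1]
  -- step 2: triangle inequality through F
  have hsplit : (fun j => xs j - X (n + 1) j)
      = (fun j => (xs j - F j) + (F j - X (n + 1) j)) := by
    funext j; ring
  have step2 : l2 (restr T (fun j => xs j - X (n + 1) j))
      ≤ l2 (restr T (fun j => xs j - F j)) + l2 (restr T (fun j => F j - X (n + 1) j)) := by
    rw [hsplit, restr_add]
    exact l2_add_le _ _
  -- step 3: minimality transfer on T
  have step3 : l2 (restr T (fun j => F j - X (n + 1) j))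
      ≤ l2 (restr T (fun j => F j - xs j)) := by
    apply restr_compare
    · intro j hj
      have h1 : X (n + 1) j = 0 := not_spt (fun hs => hj (hT3 hs))
      have h2 : xs j = 0 := not_spt (fun hs => hj (hT1 hs))
      rw [h1, h2]
    · exact hmin
  have step3' : l2 (restr T (fun j => F j - xs j)) = l2 (restr T (fun j => xs j - F j)) :=
    l2_restr_neg T F xs
  -- step 4: split the residual term
  have step4 : l2 (restr T (fun j => xs j - F j))
      ≤ l2 (restr T (fun j => r j - A.conjTranspose.mulVec (A.mulVec r) j))
        + l2 (restr T (A.conjTranspose.mulVec e')) := by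
    rw [hxa]
    have hsplit2 : (fun j => (r j - A.conjTranspose.mulVec (A.mulVec r) j)
        - A.conjTranspose.mulVec e' j)
        = (fun j => (r j - A.conjTranspose.mulVec (A.mulVec r) j)
            + (- A.conjTranspose.mulVec e' j)) := by
      funext j; ring
    rw [hsplit2, restr_add]
    refine le_trans (l2_add_le _ _) ?_
    have hneg : l2 (restr T (fun j => - A.conjTranspose.mulVec e' j))
        = l2 (restr T (A.conjTranspose.mulVec e')) := by
      unfold l2 restr
      congr 1
      refine Finset.sum_congr rfl fun j _ => ?_
      by_cases hj : j ∈ T <;> simp [hj]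
    rw [hneg]
  -- step 5/6: RIP bounds
  have step5 : l2 (restr T (fun j => r j - A.conjTranspose.mulVec (A.mulVec r) j)) ≤ δ * l2 r :=
    boundC A hδ0 T r hsr hrip'
  have step6 : l2 (restr T (A.conjTranspose.mulVec e')) ≤ Real.sqrt (1 + δ) * l2 e' :=
    boundD A hδ0 T e' (fun z hz => (hrip' z hz).2)
  -- numeric bounds
  have h565 : (5.65 : ℝ) ≤ Real.sqrt 32 := by
    rw [show (5.65 : ℝ) = Real.sqrt (5.65 ^ 2) from (Real.sqrt_sq (by norm_num)).symm]
    exact Real.sqrt_le_sqrt (by norm_num)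
  have hδub : δ ≤ 0.177 := by
    have h1 : 1 / Real.sqrt 32 ≤ 1 / 5.65 :=
      one_div_le_one_div_of_le (by norm_num) h565
    have h2 : (1 : ℝ) / 5.65 ≤ 0.177 := by norm_num
    linarith
  have hsqrt : Real.sqrt (1 + δ) ≤ 1.085 := by
    rw [show (1.085 : ℝ) = Real.sqrt (1.085 ^ 2) from (Real.sqrt_sq (by norm_num)).symm]
    exact Real.sqrt_le_sqrt (by nlinarith)
  -- put everything together
  have chain : l2 (fun j => xs j - X (n + 1) j)
      ≤ 2 * (δ * l2 r) + 2 * (Real.sqrt (1 + δ) * l2 e') := by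
    rw [step1]
    calc l2 (restr T (fun j => xs j - X (n + 1) j))
        ≤ l2 (restr T (fun j => xs j - F j)) + l2 (restr T (fun j => F j - X (n + 1) j)) := step2
      _ ≤ l2 (restr T (fun j => xs j - F j)) + l2 (restr T (fun j => xs j - F j)) := by
          linarith [step3, step3']
      _ = 2 * l2 (restr T (fun j => xs j - F j)) := by ring
      _ ≤ 2 * (δ * l2 r + Real.sqrt (1 + δ) * l2 e') := by linarith [step4, step5, step6]
      _ = 2 * (δ * l2 r) + 2 * (Real.sqrt (1 + δ) * l2 e') := by ring
  have hfin1 : 2 * (δ * l2 r) ≤ 0.5 * l2 r := by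
    have : 2 * δ ≤ 0.5 := by linarith
    calc 2 * (δ * l2 r) = (2 * δ) * l2 r := by ring
      _ ≤ 0.5 * l2 r := mul_le_mul_of_nonneg_right this (l2_nonneg r)
  have hfin2 : 2 * (Real.sqrt (1 + δ) * l2 e') ≤ 2.17 * l2 e' := by
    have : 2 * Real.sqrt (1 + δ) ≤ 2.17 := by linarith
    calc 2 * (Real.sqrt (1 + δ) * l2 e') = (2 * Real.sqrt (1 + δ)) * l2 e' := by ring
      _ ≤ 2.17 * l2 e' := mul_le_mul_of_nonneg_right this (l2_nonneg e')
  linarith [chain, hfin1, hfin2]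
end
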